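/- Sequential composition of multirelations is weakly associative: for all multirelations R, S, T over X, (R · S) · T ⊆ R · (S · T). -/
import Mathlib


open Set

/-- Sequential composition of multirelations (Peleg). -/
def mseq {X : Type*} (R S : Set (X × Set X)) : Set (X × Set X) :=
  {p | ∃ B, (p.1, B) ∈ R ∧ ∃ f : X → Set X, (∀ b ∈ B, (b, f b) ∈ S) ∧ p.2 = ⋃ b ∈ B, f b}

/-- The unit of sequential composition. -/
def sunit (X : Type*) : Set (X × Set X) := {p | p.2 = {p.1}}

/-- Parallel (concurrent) composition of multirelations. -/
def mpar {X : Type*} (R S : Set (X × Set X)) : Set (X × Set X) :=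
  {p | ∃ A B, (p.1, A) ∈ R ∧ (p.1, B) ∈ S ∧ p.2 = A ∪ B}

/-- The unit of parallel composition. -/
def punit (X : Type*) : Set (X × Set X) := {p | p.2 = (∅ : Set X)}

/-- Domain of a multirelation. -/
def mdom {X : Type*} (R : Set (X × Set X)) : Set (X × Set X) :=
  {p | p.2 = {p.1} ∧ ∃ A, (p.1, A) ∈ R}

/-- Antidomain of a multirelation. -/
def mantidom {X : Type*} (R : Set (X × Set X)) : Set (X × Set X) :=
  {p | p.2 = {p.1} ∧ ¬ ∃ A, (p.1, A) ∈ R}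

/-- Diamond operator. -/
def mdia {X : Type*} (R P : Set (X × Set X)) : Set (X × Set X) := mdom (mseq R P)

theorem stmt1 {X : Type*} (R S T : Set (X × Set X)) :
    mseq (mseq R S) T ⊆ mseq R (mseq S T) := by
  rintro ⟨a, A⟩ ⟨B, ⟨C, hC, g, hg, rfl⟩, f, hf, rfl⟩
  refine ⟨C, hC, fun c => ⋃ b ∈ g c, f b, fun c hc => ⟨g c, hg c hc, f, fun b hb => hf b ?_, rfl⟩, ?_⟩
  · exact Set.mem_biUnion hc hb
  · simp [Set.biUnion_iUnion]
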